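/- arXiv:1009.4711 — 2 statements merged into one kernel-verified Lean document; each statement's English description precedes it below -/
import Mathlib

section
/- Let n ≥ 0 and t ≥ 1, let P be a graded poset of rank n+1, and let R = Rees(P, T_{t,n+1}). Then for every subset S ⊆ {1,…,n}, the flag f-vector entry satisfies f_{S ∪ {n+1}}(R) = w(S ∪ {n+1})·f_S(P). -/
/-- The `t`-analogue `[k] = 1 + t + ⋯ + t^(k-1)`. -/
def tnum (t k : ℕ) : ℕ := ∑ i ∈ Finset.range k, t ^ i

/-- Auxiliary product defining the weight `w`: given the previous entry `p` and the
sorted list of remaining entries, multiply the factors `[s - p + 1]`. -/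
def wAux (t : ℕ) : ℕ → List ℕ → ℕ
  | _, [] => 1
  | p, s :: rest => tnum t (s - p + 1) * wAux t s rest

/-- The weight `w(S) = [s₁]·[s₂-s₁+1]⋯[s_k-s_{k-1}+1]` for `S = {s₁ < ⋯ < s_k}`,
with `w(∅) = 1`. -/
def wWeight (t : ℕ) (S : Finset ℕ) : ℕ := wAux t 1 (S.sort (· ≤ ·))

/-- The weight `v(S) = w(S ∪ {n+1}) - w(S)` for nonempty `S ⊆ {1,…,n}`, and
`v(∅) = t·[n]`. -/
def vWeight (t n : ℕ) (S : Finset ℕ) : ℤ :=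
  if S = ∅ then t * tnum t n else (wWeight t (S ∪ {n + 1}) : ℤ) - (wWeight t S : ℤ)

/-- The flag `f`-vector entry `f_S` of a bounded poset with rank function `rk`:
the number of chains `⊥ < x₁ < ⋯ < x_k < ⊤` whose multiset of ranks is exactly `S`,
encoded as strictly increasing rank-respecting functions `S → β`. -/
noncomputable def flagF {β : Type} [PartialOrder β] [BoundedOrder β] (rk : β → ℕ) (S : Finset ℕ) : ℕ :=
  Nat.card {g : {s : ℕ // s ∈ S} → β //
    (∀ s, rk (g s) = s.val) ∧
    (∀ s s' : {s : ℕ // s ∈ S}, s.val < s'.val → g s < g s') ∧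
    (∀ s, ⊥ < g s ∧ g s < ⊤)}

/-- The proper part of the Rees product of a graded poset `(α, rk)` of rank `n+1`
with the `t`-ary tree `T_{t,n+1}`: pairs `(p, w)` with `p ≠ ⊥`, `w` a word of length
at most `n` over a `t`-letter alphabet, and `|w| ≤ rk p - 1`. -/
def ReesElt (α : Type) [PartialOrder α] [OrderBot α] (rk : α → ℕ) (t n : ℕ) : Type :=
  {pw : α × List (Fin t) // pw.1 ≠ ⊥ ∧ pw.2.length ≤ n ∧ pw.2.length + 1 ≤ rk pw.1}

/-- The Rees order: `(p,w) ≤ (p',w')` iff `p ≤ p'`, `w` is a prefix of `w'`, and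
`rk p' - rk p ≥ |w'| - |w|`. -/
instance (α : Type) [PartialOrder α] [OrderBot α] (rk : α → ℕ) (t n : ℕ) :
    PartialOrder (ReesElt α rk t n) where
  le a b := a.1.1 ≤ b.1.1 ∧ a.1.2 <+: b.1.2 ∧
    rk a.1.1 + b.1.2.length ≤ rk b.1.1 + a.1.2.length
  le_refl a := ⟨le_refl _, List.prefix_refl _, le_refl _⟩
  le_trans a b c hab hbc :=
    ⟨hab.1.trans hbc.1, hab.2.1.trans hbc.2.1, by
      have h1 := hab.2.2; have h2 := hbc.2.2; omega⟩
  le_antisymm a b hab hba := by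
    apply Subtype.ext
    have h1 : a.1.1 = b.1.1 := le_antisymm hab.1 hba.1
    have h2 : a.1.2 = b.1.2 := hab.2.1.eq_of_length_le hba.2.1.length_le
    exact Prod.ext h1 h2

/-- The Rees product `Rees(P, T_{t,n+1})`: the proper part together with an adjoined
minimum `⊥` and maximum `⊤`. -/
abbrev ReesTree (α : Type) [PartialOrder α] [OrderBot α] (rk : α → ℕ) (t n : ℕ) : Type :=
  WithBot (WithTop (ReesElt α rk t n))

/-- The rank function of `Rees(P, T_{t,n+1})`: `ρ(⊥) = 0`, `ρ(⊤) = n+2`, and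
`ρ(p,w) = rk p`. -/
noncomputable def reesRank (α : Type) [PartialOrder α] [OrderBot α] (rk : α → ℕ) (t n : ℕ) :
    ReesTree α rk t n → ℕ :=
  WithBot.recBotCoe 0 (WithTop.recTopCoe (n + 2) (fun a => rk a.1.1))

/-- Lists of length ≤ k are equivalent to a sigma of tuples. -/
def listLenEquiv (γ : Type) (k : ℕ) :
    {z : List γ // z.length ≤ k} ≃ (d : Fin (k + 1)) × (Fin d → γ) where
  toFun z := ⟨⟨z.1.length, Nat.lt_succ_of_le z.2⟩, z.1.get⟩
  invFun p := ⟨List.ofFn p.2, by simpa using Nat.le_of_lt_succ p.1.isLt⟩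
  left_inv z := Subtype.ext (List.ofFn_get z.1)
  right_inv p := by
    obtain ⟨⟨d, hd⟩, f⟩ := p
    have h : (List.ofFn f).length = d := List.length_ofFn
    refine Sigma.ext (Fin.ext (by simpa using h)) ?_
    refine (Fin.heq_fun_iff (by simpa using h)).mpr ?_
    intro i
    simp [List.get_ofFn]

instance (t k : ℕ) : Fintype {z : List (Fin t) // z.length ≤ k} :=
  Fintype.ofEquiv _ (listLenEquiv (Fin t) k).symm

lemma card_listLen (t k : ℕ) :
    Nat.card {z : List (Fin t) // z.length ≤ k} = tnum t (k + 1) := by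
  rw [Nat.card_eq_fintype_card, Fintype.card_congr (listLenEquiv (Fin t) k),
    Fintype.card_sigma]
  simp only [Fintype.card_fun, Fintype.card_fin, tnum]
  exact Fin.sum_univ_eq_sum_range (fun i => t ^ i) (k + 1)

/-- Extensions of a word `u` by at most `a - p` letters. -/
def extEquiv (t : ℕ) (u : List (Fin t)) (p a : ℕ) (hpa : p ≤ a) :
    {v : List (Fin t) // u <+: v ∧ p + v.length ≤ a + u.length} ≃
      {z : List (Fin t) // z.length ≤ a - p} where
  toFun v := ⟨v.1.drop u.length, by
    have h1 := v.2.1.length_le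
    have h2 := v.2.2
    rw [List.length_drop]
    omega⟩
  invFun z := ⟨u ++ z.1, List.prefix_append u z.1, by
    have := z.2
    rw [List.length_append]
    omega⟩
  left_inv v := by
    obtain ⟨v, hv, h2⟩ := v
    obtain ⟨r, rfl⟩ := hv
    simp [List.drop_left]
  right_inv z := Subtype.ext List.drop_left

lemma card_ext (t : ℕ) (u : List (Fin t)) (p a : ℕ) (hpa : p ≤ a) :
    Nat.card {v : List (Fin t) // u <+: v ∧ p + v.length ≤ a + u.length} =
      tnum t (a - p + 1) := by
  rw [Nat.card_congr (extEquiv t u p a hpa), card_listLen]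

lemma finite_chains (t : ℕ) (T : Finset ℕ) (p : ℕ) (u : List (Fin t))
    (C : ({x : ℕ // x ∈ T} → List (Fin t)) → Prop) :
    Finite {w : {x : ℕ // x ∈ T} → List (Fin t) //
      (∀ s, u <+: w s ∧ p + (w s).length ≤ s.1 + u.length) ∧ C w} := by
  set N := T.sup id + u.length with hN
  have : ∀ (w : {w : {x : ℕ // x ∈ T} → List (Fin t) //
      (∀ s, u <+: w s ∧ p + (w s).length ≤ s.1 + u.length) ∧ C w}) (s : {x : ℕ // x ∈ T}),
      (w.1 s).length ≤ N := by
    intro w s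
    have h1 := (w.2.1 s).2
    have h2 : s.1 ≤ T.sup id := Finset.le_sup (f := id) s.2
    omega
  have hinj : Function.Injective
      (fun (w : {w : {x : ℕ // x ∈ T} → List (Fin t) //
        (∀ s, u <+: w s ∧ p + (w s).length ≤ s.1 + u.length) ∧ C w})
        (s : {x : ℕ // x ∈ T}) => (⟨w.1 s, this w s⟩ : {z : List (Fin t) // z.length ≤ N})) := by
    intro w w' h
    apply Subtype.ext
    funext s
    exact congrArg Subtype.val (congrFun h s)
  exact Finite.of_injective _ hinj

lemma key (t : ℕ) (T : Finset ℕ) : ∀ (p : ℕ) (u : List (Fin t)),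
    u.length + 1 ≤ p → (∀ x ∈ T, p ≤ x) →
    Nat.card {w : {x : ℕ // x ∈ T} → List (Fin t) //
      (∀ s, u <+: w s ∧ p + (w s).length ≤ s.1 + u.length) ∧
      (∀ s s' : {x : ℕ // x ∈ T}, s.1 < s'.1 →
        w s <+: w s' ∧ s.1 + (w s').length ≤ s'.1 + (w s).length)} =
      wAux t p (T.sort (· ≤ ·)) := by
  induction T using Finset.induction_on_min with
  | empty =>
    intro p u hu hT
    have : IsEmpty {x : ℕ // x ∈ (∅ : Finset ℕ)} := by
      constructor; rintro ⟨x, hx⟩; simp at hx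
    rw [Finset.sort_empty]
    have : Nonempty {w : {x : ℕ // x ∈ (∅ : Finset ℕ)} → List (Fin t) //
        (∀ s, u <+: w s ∧ p + (w s).length ≤ s.1 + u.length) ∧
        (∀ s s' : {x : ℕ // x ∈ (∅ : Finset ℕ)}, s.1 < s'.1 →
          w s <+: w s' ∧ s.1 + (w s').length ≤ s'.1 + (w s).length)} :=
      ⟨⟨fun s => (Finset.notMem_empty _ s.2).elim, fun s => (Finset.notMem_empty _ s.2).elim,
        fun s => (Finset.notMem_empty _ s.2).elim⟩⟩
    have hsub : Subsingleton {w : {x : ℕ // x ∈ (∅ : Finset ℕ)} → List (Fin t) //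
        (∀ s, u <+: w s ∧ p + (w s).length ≤ s.1 + u.length) ∧
        (∀ s s' : {x : ℕ // x ∈ (∅ : Finset ℕ)}, s.1 < s'.1 →
          w s <+: w s' ∧ s.1 + (w s').length ≤ s'.1 + (w s).length)} := by
      constructor
      intro w w'
      apply Subtype.ext
      funext s
      exact (Finset.notMem_empty _ s.2).elim
    exact Nat.card_unique
  | insert a T ha ih =>
    intro p u hu hT
    have haT : a ∉ T := fun h => absurd (ha a h) (lt_irrefl a)
    have hpa : p ≤ a := hT a (Finset.mem_insert_self a T)
    rw [Finset.sort_insert (r := (· ≤ ·)) (fun b hb => (ha b hb).le) haT]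
    show _ = tnum t (a - p + 1) * wAux t a (T.sort (· ≤ ·))
    have hbij : ∃ Φ : ((v : {v : List (Fin t) // u <+: v ∧ p + v.length ≤ a + u.length}) ×
        {w : {x : ℕ // x ∈ T} → List (Fin t) //
          (∀ s, v.1 <+: w s ∧ a + (w s).length ≤ s.1 + v.1.length) ∧
          (∀ s s' : {x : ℕ // x ∈ T}, s.1 < s'.1 →
            w s <+: w s' ∧ s.1 + (w s').length ≤ s'.1 + (w s).length)}) →
        {w : {x : ℕ // x ∈ insert a T} → List (Fin t) //
          (∀ s, u <+: w s ∧ p + (w s).length ≤ s.1 + u.length) ∧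
          (∀ s s' : {x : ℕ // x ∈ insert a T}, s.1 < s'.1 →
            w s <+: w s' ∧ s.1 + (w s').length ≤ s'.1 + (w s).length)},
        Function.Bijective Φ := by
      refine ⟨fun q => ⟨fun x => if h : x.1 = a then q.1.1
        else q.2.1 ⟨x.1, Finset.mem_of_mem_insert_of_ne x.2 h⟩, ?_, ?_⟩, ?_, ?_⟩
      · intro x
        by_cases h : x.1 = a
        · simp only [dif_pos h]
          exact ⟨q.1.2.1, by have h2 := q.1.2.2; omega⟩
        · simp only [dif_neg h]
          have h1 := q.2.2.1 ⟨x.1, Finset.mem_of_mem_insert_of_ne x.2 h⟩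
          have h3 : a + (q.2.1 ⟨x.1, Finset.mem_of_mem_insert_of_ne x.2 h⟩).length ≤
            x.1 + (q.1.1).length := h1.2
          exact ⟨q.1.2.1.trans h1.1, by have h2 := q.1.2.2; omega⟩
      · intro x y hxy
        by_cases hx : x.1 = a
        · by_cases hy : y.1 = a
          · exact absurd hxy (by omega)
          · simp only [dif_pos hx, dif_neg hy]
            have h1 := q.2.2.1 ⟨y.1, Finset.mem_of_mem_insert_of_ne y.2 hy⟩
            have h3 : a + (q.2.1 ⟨y.1, Finset.mem_of_mem_insert_of_ne y.2 hy⟩).length ≤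
              y.1 + (q.1.1).length := h1.2
            exact ⟨h1.1, by omega⟩
        · by_cases hy : y.1 = a
          · exfalso
            have h2 := ha x.1 (Finset.mem_of_mem_insert_of_ne x.2 hx)
            omega
          · simp only [dif_neg hx, dif_neg hy]
            exact q.2.2.2 ⟨x.1, Finset.mem_of_mem_insert_of_ne x.2 hx⟩
              ⟨y.1, Finset.mem_of_mem_insert_of_ne y.2 hy⟩ hxy
      · rintro ⟨v, w⟩ ⟨v', w'⟩ h
        have hval := congrArg Subtype.val h
        simp only at hval
        have hv : v = v' := by
          have h1 := congrFun hval ⟨a, Finset.mem_insert_self a T⟩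
          simp only [dif_pos] at h1
          exact Subtype.ext h1
        subst hv
        have hw : w = w' := by
          apply Subtype.ext
          funext s
          have hsa : s.1 ≠ a := (ha s.1 s.2).ne'
          have h1 := congrFun hval ⟨s.1, Finset.mem_insert_of_mem s.2⟩
          simp only [dif_neg hsa] at h1
          exact h1
        rw [hw]
      · rintro ⟨w, hw1, hw2⟩
        have hamem : a ∈ insert a T := Finset.mem_insert_self a T
        refine ⟨⟨⟨w ⟨a, hamem⟩, hw1 ⟨a, hamem⟩⟩,
          ⟨fun s => w ⟨s.1, Finset.mem_insert_of_mem s.2⟩, ?_, ?_⟩⟩, ?_⟩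
        · intro s
          exact hw2 ⟨a, hamem⟩ ⟨s.1, Finset.mem_insert_of_mem s.2⟩ (ha s.1 s.2)
        · intro s s' hss
          exact hw2 ⟨s.1, Finset.mem_insert_of_mem s.2⟩
            ⟨s'.1, Finset.mem_insert_of_mem s'.2⟩ hss
        · apply Subtype.ext
          funext x
          by_cases h : x.1 = a
          · exact (dif_pos h).trans (congrArg w (Subtype.ext h.symm))
          · exact dif_neg h
    obtain ⟨Φ, hΦ⟩ := hbij
    rw [← Nat.card_eq_of_bijective Φ hΦ]
    haveI hF1 : Fintype {v : List (Fin t) // u <+: v ∧ p + v.length ≤ a + u.length} :=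
      Fintype.ofEquiv _ (extEquiv t u p a hpa).symm
    haveI hF2 : ∀ v : {v : List (Fin t) // u <+: v ∧ p + v.length ≤ a + u.length},
        Fintype {w : {x : ℕ // x ∈ T} → List (Fin t) //
          (∀ s, v.1 <+: w s ∧ a + (w s).length ≤ s.1 + v.1.length) ∧
          (∀ s s' : {x : ℕ // x ∈ T}, s.1 < s'.1 →
            w s <+: w s' ∧ s.1 + (w s').length ≤ s'.1 + (w s).length)} :=
      fun v => @Fintype.ofFinite _ (finite_chains t T a v.1 _)
    rw [Nat.card_eq_fintype_card, Fintype.card_sigma]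
    have hfib : ∀ v : {v : List (Fin t) // u <+: v ∧ p + v.length ≤ a + u.length},
        Fintype.card {w : {x : ℕ // x ∈ T} → List (Fin t) //
          (∀ s, v.1 <+: w s ∧ a + (w s).length ≤ s.1 + v.1.length) ∧
          (∀ s s' : {x : ℕ // x ∈ T}, s.1 < s'.1 →
            w s <+: w s' ∧ s.1 + (w s').length ≤ s'.1 + (w s).length)} =
        wAux t a (T.sort (· ≤ ·)) := by
      intro v
      rw [← Nat.card_eq_fintype_card]
      exact ih a v.1 (by have := v.2.2; omega) (fun x hx => (ha x hx).le)
    rw [Finset.sum_congr rfl (fun v _ => hfib v), Finset.sum_const, smul_eq_mul,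
      Finset.card_univ, ← Nat.card_eq_fintype_card, card_ext t u p a hpa]

lemma ReesElt.le_def {α : Type} [PartialOrder α] [OrderBot α] {rk : α → ℕ} {t n : ℕ}
    (a b : ReesElt α rk t n) :
    a ≤ b ↔ a.1.1 ≤ b.1.1 ∧ a.1.2 <+: b.1.2 ∧
      rk a.1.1 + b.1.2.length ≤ rk b.1.1 + a.1.2.length := Iff.rfl

/-- The chain subtype used in `key`. -/
abbrev Cty (t : ℕ) (T : Finset ℕ) (p : ℕ) (u : List (Fin t)) : Type :=
  {w : {x : ℕ // x ∈ T} → List (Fin t) //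
    (∀ s, u <+: w s ∧ p + (w s).length ≤ s.1 + u.length) ∧
    (∀ s s' : {x : ℕ // x ∈ T}, s.1 < s'.1 →
      w s <+: w s' ∧ s.1 + (w s').length ≤ s'.1 + (w s).length)}

/-- The flag chain subtype. -/
abbrev Bty (β : Type) [PartialOrder β] [BoundedOrder β] (rk : β → ℕ) (S : Finset ℕ) : Type :=
  {g : {s : ℕ // s ∈ S} → β //
    (∀ s, rk (g s) = s.val) ∧
    (∀ s s' : {s : ℕ // s ∈ S}, s.val < s'.val → g s < g s') ∧
    (∀ s, ⊥ < g s ∧ g s < ⊤)}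

theorem statement2 (n t : ℕ) (ht : 1 ≤ t)
    (α : Type) [Fintype α] [PartialOrder α] [BoundedOrder α]
    (rk : α → ℕ) (hbot : rk ⊥ = 0) (htop : rk ⊤ = n + 1)
    (hcov : ∀ x y : α, x ⋖ y → rk y = rk x + 1)
    (S : Finset ℕ) (hS : S ⊆ Finset.Icc 1 n) :
    flagF (reesRank α rk t n) (S ∪ {n + 1}) = wWeight t (S ∪ {n + 1}) * flagF rk S := by
  classical
  set T := S ∪ {n + 1} with hTdef
  have hmemT : ∀ x ∈ T, 1 ≤ x ∧ x ≤ n + 1 := by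
    intro x hx
    rcases Finset.mem_union.mp hx with h | h
    · have := hS h; simp only [Finset.mem_Icc] at this; omega
    · simp only [Finset.mem_singleton] at h; omega
  have hSn : ∀ x ∈ S, 1 ≤ x ∧ x ≤ n := by
    intro x hx; have := hS hx; simpa [Finset.mem_Icc] using this
  have hnotS : ∀ x ∈ T, x ∉ S → x = n + 1 := by
    intro x hx hxs
    rcases Finset.mem_union.mp hx with h | h
    · exact absurd h hxs
    · simpa using h
  have htopu : ∀ y : α, rk y = n + 1 → y = ⊤ := by
    intro y hy
    by_contra hne
    obtain ⟨m, -, hm⟩ :=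
      Finite.exists_le_maximal (p := fun x : α => x ≠ ⊤ ∧ n + 1 ≤ rk x) ⟨hne, hy.ge⟩
    have hmt : m < ⊤ := lt_top_iff_ne_top.mpr hm.1.1
    obtain ⟨z, hz, -⟩ := exists_covBy_le_of_lt hmt
    have hrz := hcov m z hz
    have hzt : z ≠ ⊤ := by
      intro h; rw [h, htop] at hrz; have := hm.1.2; omega
    have hzm := hm.2 ⟨hzt, by have := hm.1.2; omega⟩ hz.lt.le
    exact hz.lt.not_ge hzm
  have key2' : Nat.card (Cty t T 1 []) = wAux t 1 (T.sort (· ≤ ·)) :=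
    key t T 1 [] (by simp) (fun x hx => (hmemT x hx).1)
  -- helper facts for the bijection
  have hwlen : ∀ (w : Cty t T 1 []) (s : {x : ℕ // x ∈ T}), (w.1 s).length + 1 ≤ s.1 := by
    intro w s
    have h := (w.2.1 s).2
    simp only [List.length_nil, add_zero] at h
    omega
  have hpcrk : ∀ (f : Bty α rk S) (s : {x : ℕ // x ∈ T}),
      rk (if h : s.1 ∈ S then f.1 ⟨s.1, h⟩ else ⊤) = s.1 := by
    intro f s
    by_cases h : s.1 ∈ S
    · rw [dif_pos h]; exact f.2.1 ⟨s.1, h⟩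
    · rw [dif_neg h, htop, hnotS s.1 s.2 h]
  have hmem : ∀ (q : Bty α rk S × Cty t T 1 []) (s : {x : ℕ // x ∈ T}),
      (if h : s.1 ∈ S then q.1.1 ⟨s.1, h⟩ else ⊤) ≠ ⊥ ∧ (q.2.1 s).length ≤ n ∧
      (q.2.1 s).length + 1 ≤ rk (if h : s.1 ∈ S then q.1.1 ⟨s.1, h⟩ else ⊤) := by
    intro q s
    have h1 := hpcrk q.1 s
    have h2 := hwlen q.2 s
    have h3 := hmemT s.1 s.2
    refine ⟨?_, by omega, by omega⟩
    intro hb; rw [hb, hbot] at h1; omega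
  have hbij : ∃ Φ : Bty α rk S × Cty t T 1 [] →
      Bty (ReesTree α rk t n) (reesRank α rk t n) T, Function.Bijective Φ := by
    refine ⟨fun q => ⟨fun s =>
      (↑(↑(show ReesElt α rk t n from
        ⟨((if h : s.1 ∈ S then q.1.1 ⟨s.1, h⟩ else ⊤), q.2.1 s), hmem q s⟩) :
        WithTop (ReesElt α rk t n)) : ReesTree α rk t n),
      ?_, ?_, ?_⟩, ?_, ?_⟩
    · intro s
      exact hpcrk q.1 s
    · intro s s' hss
      refine WithBot.coe_lt_coe.mpr (WithTop.coe_lt_coe.mpr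
        (lt_of_le_of_ne ((ReesElt.le_def _ _).mpr ⟨?_, ?_, ?_⟩) ?_))
      · -- pc monotone
        show (if h : s.1 ∈ S then q.1.1 ⟨s.1, h⟩ else ⊤) ≤
          (if h : s'.1 ∈ S then q.1.1 ⟨s'.1, h⟩ else ⊤)
        by_cases h : s.1 ∈ S
        · by_cases h' : s'.1 ∈ S
          · simp only [dif_pos h, dif_pos h']
            exact (q.1.2.2.1 ⟨s.1, h⟩ ⟨s'.1, h'⟩ hss).le
          · simp only [dif_pos h, dif_neg h']
            exact le_top
        · exfalso
          have h1 := hnotS s.1 s.2 h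
          have h2 := hmemT s'.1 s'.2
          omega
      · exact (q.2.2.2 s s' hss).1
      · have e1 := hpcrk q.1 s
        have e2 := hpcrk q.1 s'
        have h3 := (q.2.2.2 s s' hss).2
        show rk (if h : s.1 ∈ S then q.1.1 ⟨s.1, h⟩ else ⊤) + (q.2.1 s').length ≤
          rk (if h : s'.1 ∈ S then q.1.1 ⟨s'.1, h⟩ else ⊤) + (q.2.1 s).length
        omega
      · intro heq
        have h5 : rk (if h : s.1 ∈ S then q.1.1 ⟨s.1, h⟩ else ⊤) =
            rk (if h : s'.1 ∈ S then q.1.1 ⟨s'.1, h⟩ else ⊤) :=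
          congrArg (fun z : ReesElt α rk t n => rk z.1.1) heq
        rw [hpcrk q.1 s, hpcrk q.1 s'] at h5
        omega
    · intro s
      refine ⟨WithBot.bot_lt_coe _, ?_⟩
      exact WithBot.coe_lt_coe.mpr (WithTop.coe_lt_top _)
    · -- injective
      rintro ⟨f, w⟩ ⟨f', w'⟩ h
      have hval := congrArg Subtype.val h
      have hcomp : ∀ s : {x : ℕ // x ∈ T},
          (((if h : s.1 ∈ S then f.1 ⟨s.1, h⟩ else ⊤), w.1 s) : α × List (Fin t)) =
          ((if h : s.1 ∈ S then f'.1 ⟨s.1, h⟩ else ⊤), w'.1 s) := by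
        intro s
        have h1 := congrFun hval s
        exact Subtype.ext_iff.mp (WithTop.coe_inj.mp (WithBot.coe_inj.mp h1))
      have hw : w = w' := Subtype.ext (funext fun s => congrArg Prod.snd (hcomp s))
      have hf : f = f' := by
        apply Subtype.ext
        funext s
        have h1 := congrArg Prod.fst (hcomp ⟨s.1, Finset.mem_union_left _ s.2⟩)
        simp only [dif_pos s.2] at h1
        exact h1
      rw [hf, hw]
    · -- surjective
      rintro ⟨g, hg1, hg2, hg3⟩
      have hex : ∀ s, ∃ x : ReesElt α rk t n,
          ((x : WithTop (ReesElt α rk t n)) : ReesTree α rk t n) = g s := by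
        intro s
        obtain ⟨b, hb⟩ := WithBot.ne_bot_iff_exists.mp (hg3 s).1.ne'
        have hbt : b ≠ ⊤ := by
          intro hbt
          rw [hbt] at hb
          exact (hg3 s).2.ne hb.symm
        obtain ⟨x, hx⟩ := WithTop.ne_top_iff_exists.mp hbt
        exact ⟨x, by rw [hx, hb]⟩
      choose x hx using hex
      have hxrk : ∀ s, rk (x s).1.1 = s.1 := by
        intro s
        have h1 := hg1 s
        rw [← hx s] at h1
        exact h1
      have hxle : ∀ s s', s.1 < s'.1 → (x s).1.1 ≤ (x s').1.1 ∧ (x s).1.2 <+: (x s').1.2 ∧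
          rk (x s).1.1 + (x s').1.2.length ≤ rk (x s').1.1 + (x s).1.2.length := by
        intro s s' h
        have h1 := (hg2 s s' h).le
        rw [← hx s, ← hx s'] at h1
        exact (ReesElt.le_def _ _).mp (WithTop.coe_le_coe.mp (WithBot.coe_le_coe.mp h1))
      refine ⟨⟨⟨fun s => (x ⟨s.1, Finset.mem_union_left _ s.2⟩).1.1, ?_, ?_, ?_⟩,
        ⟨fun s => (x s).1.2, ?_, ?_⟩⟩, ?_⟩
      · intro s
        exact hxrk ⟨s.1, Finset.mem_union_left _ s.2⟩
      · intro s s' hss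
        refine lt_of_le_of_ne (hxle ⟨s.1, Finset.mem_union_left _ s.2⟩
          ⟨s'.1, Finset.mem_union_left _ s'.2⟩ hss).1 ?_
        intro heq
        have heq' : (x ⟨s.1, Finset.mem_union_left _ s.2⟩).1.1 =
            (x ⟨s'.1, Finset.mem_union_left _ s'.2⟩).1.1 := heq
        have e1 : rk (x ⟨s.1, Finset.mem_union_left _ s.2⟩).1.1 = s.1 :=
          hxrk ⟨s.1, Finset.mem_union_left _ s.2⟩
        have e2 : rk (x ⟨s'.1, Finset.mem_union_left _ s'.2⟩).1.1 = s'.1 :=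
          hxrk ⟨s'.1, Finset.mem_union_left _ s'.2⟩
        rw [heq'] at e1
        omega
      · intro s
        constructor
        · exact bot_lt_iff_ne_bot.mpr (x ⟨s.1, Finset.mem_union_left _ s.2⟩).2.1
        · refine lt_top_iff_ne_top.mpr ?_
          intro h
          have h' : (x ⟨s.1, Finset.mem_union_left _ s.2⟩).1.1 = ⊤ := h
          have e1 : rk (x ⟨s.1, Finset.mem_union_left _ s.2⟩).1.1 = s.1 :=
            hxrk ⟨s.1, Finset.mem_union_left _ s.2⟩
          rw [h', htop] at e1
          have := hSn s.1 s.2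
          omega
      · intro s
        refine ⟨List.nil_prefix, ?_⟩
        show 1 + (x s).1.2.length ≤ s.1 + (List.length ([] : List (Fin t)))
        have h1 := (x s).2.2.2
        have e1 := hxrk s
        simp only [List.length_nil, add_zero]
        omega
      · intro s s' hss
        have h1 := hxle s s' hss
        have e1 := hxrk s
        have e2 := hxrk s'
        refine ⟨h1.2.1, ?_⟩
        show s.1 + (x s').1.2.length ≤ s'.1 + (x s).1.2.length
        have := h1.2.2
        omega
      · apply Subtype.ext
        funext s
        refine Eq.trans ?_ (hx s)
        refine congrArg _ (congrArg _ ?_)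
        apply Subtype.ext
        have hfst : (if h : s.1 ∈ S then (x ⟨s.1, Finset.mem_union_left _ h⟩).1.1 else ⊤) =
            (x s).1.1 := by
          by_cases h : s.1 ∈ S
          · rw [dif_pos h]
          · rw [dif_neg h]
            exact (htopu (x s).1.1 (by rw [hxrk s, hnotS s.1 s.2 h])).symm
        show ((if h : s.1 ∈ S then (x ⟨s.1, Finset.mem_union_left _ h⟩).1.1 else ⊤),
          (x s).1.2) = (x s).1
        exact Prod.ext hfst rfl
  obtain ⟨Φ, hΦ⟩ := hbij
  have e1 : flagF (reesRank α rk t n) T =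
      Nat.card (Bty (ReesTree α rk t n) (reesRank α rk t n) T) := rfl
  have e2 : flagF rk S = Nat.card (Bty α rk S) := rfl
  rw [e1, e2, ← Nat.card_eq_of_bijective Φ hΦ, Nat.card_prod, key2',
    show wWeight t T = wAux t 1 (T.sort (· ≤ ·)) from rfl]
  exact Nat.mul_comm _ _
end

section
/- Let n ≥ 0 and t ≥ 1, let P be a graded poset of rank n+1, and let R = Rees(P, T_{t,n+1}). Then μ(R) = Σ_{S ⊆ {1,…,n}} (−1)^{|S|} · v(S) · f_S(P). -/
set_option linter.unusedSectionVars false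
set_option maxHeartbeats 1000000
open Finset
open scoped Classical


open Finset

section Infra
variable {n t : ℕ}
variable {α : Type} [Fintype α] [PartialOrder α] [BoundedOrder α]
variable {rk : α → ℕ}

/-- strict monotonicity of rank from the cover condition -/
lemma rk_lt_of_lt (hcov : ∀ x y : α, x ⋖ y → rk y = rk x + 1) :
    ∀ {x y : α}, x < y → rk x < rk y := by
  classical
  suffices h : ∀ (m : ℕ) (y x : α), (univ.filter (· < y)).card ≤ m → x < y → rk x < rk y by
    intro x y hxy; exact h _ y x le_rfl hxy
  intro m
  induction m with
  | zero =>
    intro y x hc hxy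
    have hx : x ∈ univ.filter (· < y) := by simp [hxy]
    have := Finset.card_pos.2 ⟨x, hx⟩
    omega
  | succ m ih =>
    intro y x hc hxy
    obtain ⟨z, hz, hzmax⟩ := Finset.exists_maximal (s := univ.filter fun z => x ≤ z ∧ z < y)
      ⟨x, by simp [hxy]⟩
    simp only [Finset.mem_filter, Finset.mem_univ, true_and] at hz
    have hcov' : z ⋖ y := by
      refine ⟨hz.2, fun w hzw hwy => ?_⟩
      exact (hzmax (by simp [le_trans hz.1 hzw.le, hwy]) hzw.le).not_gt hzw
    have hy : rk y = rk z + 1 := hcov _ _ hcov'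
    rcases eq_or_lt_of_le hz.1 with rfl | hxz
    · omega
    · have hsub : (univ.filter (· < z)) ⊂ (univ.filter (· < y)) := by
        refine Finset.ssubset_iff_of_subset ?_ |>.2 ⟨z, by simp [hz.2], by simp⟩
        intro w hw; simp only [Finset.mem_filter, Finset.mem_univ, true_and] at hw ⊢
        exact hw.trans hz.2
      have := Finset.card_lt_card hsub
      have hxz' := ih z x (by omega) hxz
      omega

lemma rk_le (htop : rk ⊤ = n + 1) (hcov : ∀ x y : α, x ⋖ y → rk y = rk x + 1) (x : α) :
    rk x ≤ n + 1 := by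
  rcases eq_or_lt_of_le (le_top : x ≤ ⊤) with rfl | h
  · omega
  · have := rk_lt_of_lt hcov h; omega

lemma rk_le_of_ne_top (htop : rk ⊤ = n + 1) (hcov : ∀ x y : α, x ⋖ y → rk y = rk x + 1)
    {x : α} (hx : x ≠ ⊤) : rk x ≤ n := by
  have := rk_lt_of_lt hcov (lt_of_le_of_ne (le_top : x ≤ ⊤) hx); omega

lemma eq_top_of_rk (htop : rk ⊤ = n + 1) (hcov : ∀ x y : α, x ⋖ y → rk y = rk x + 1)
    {x : α} (hx : rk x = n + 1) : x = ⊤ := by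
  by_contra h
  have := rk_le_of_ne_top htop hcov h; omega

lemma one_le_rk (hbot : rk ⊥ = 0) (hcov : ∀ x y : α, x ⋖ y → rk y = rk x + 1)
    {x : α} (hx : x ≠ ⊥) : 1 ≤ rk x := by
  have := rk_lt_of_lt hcov (lt_of_le_of_ne (bot_le : (⊥:α) ≤ x) (Ne.symm hx)); omega

instance : Finite (ReesElt α rk t n) := by
  classical
  refine Finite.of_injective
    (fun a => ((a.1.1, fun i => a.1.2[(i : ℕ)]?) : α × (Fin (n+1) → Option (Fin t)))) ?_
  rintro ⟨⟨p, w⟩, hp, hw, hr⟩ ⟨⟨q, v⟩, hq, hv, hs⟩ h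
  simp only [Prod.mk.injEq] at h
  apply Subtype.ext
  refine Prod.ext h.1 ?_
  apply List.ext_getElem?
  intro i
  by_cases hi : i < n + 1
  · exact congrFun h.2 ⟨i, hi⟩
  · have hw' : w.length ≤ n := hw
    have hv' : v.length ≤ n := hv
    have hwi : w.length ≤ i := by omega
    have hvi : v.length ≤ i := by omega
    rw [List.getElem?_eq_none hwi, List.getElem?_eq_none hvi]

noncomputable instance : Fintype (ReesElt α rk t n) := Fintype.ofFinite _

/-- embedding of the proper part into the Rees tree poset -/
def emb (a : ReesElt α rk t n) : ReesTree α rk t n := ((a : WithTop (ReesElt α rk t n)) : WithBot _)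

lemma emb_le_emb {a b : ReesElt α rk t n} : emb a ≤ emb b ↔ a ≤ b := by
  simp [emb]

lemma emb_lt_emb {a b : ReesElt α rk t n} : emb a < emb b ↔ a < b := by
  simp [emb]

lemma bot_lt_emb (a : ReesElt α rk t n) : (⊥ : ReesTree α rk t n) < emb a :=
  WithBot.bot_lt_coe _

lemma emb_lt_top (a : ReesElt α rk t n) : emb a < (⊤ : ReesTree α rk t n) := by
  have : (⊤ : ReesTree α rk t n) = ((⊤ : WithTop (ReesElt α rk t n)) : WithBot _) := rfl
  rw [this, emb, WithBot.coe_lt_coe]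
  exact WithTop.coe_lt_top a

lemma bot_lt_top' : (⊥ : ReesTree α rk t n) < ⊤ := by
  have : (⊤ : ReesTree α rk t n) = ((⊤ : WithTop (ReesElt α rk t n)) : WithBot _) := rfl
  rw [this]; exact WithBot.bot_lt_coe _

lemma rees_cases (z : ReesTree α rk t n) : z = ⊥ ∨ z = ⊤ ∨ ∃ a, z = emb a := by
  rcases z with _ | (_ | a)
  · exact Or.inl rfl
  · exact Or.inr (Or.inl rfl)
  · exact Or.inr (Or.inr ⟨a, rfl⟩)

lemma reesRank_bot : reesRank α rk t n ⊥ = 0 := rfl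
lemma reesRank_top : reesRank α rk t n ⊤ = n + 2 := rfl
lemma reesRank_emb (a : ReesElt α rk t n) : reesRank α rk t n (emb a) = rk a.1.1 := rfl

end Infra

section Counting
variable {n t : ℕ}
variable {α : Type} [Fintype α] [PartialOrder α] [BoundedOrder α]
variable {rk : α → ℕ}

instance : Finite (ReesTree α rk t n) :=
  inferInstanceAs (Finite (Option (Option (ReesElt α rk t n))))

noncomputable instance : Fintype (ReesTree α rk t n) :=
  inferInstanceAs (Fintype (Option (Option (ReesElt α rk t n))))

/-- number of chains above `x` in `α` with prescribed rank list -/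
noncomputable def abP (rk : α → ℕ) : List ℕ → α → ℕ
  | [], _ => 1
  | s :: L, x => ∑ q ∈ univ.filter (fun q => x < q ∧ rk q = s), abP rk L q

/-- number of chains above `a` in the proper part with prescribed rank list -/
noncomputable def abE (rk : α → ℕ) (t n : ℕ) : List ℕ → ReesElt α rk t n → ℕ
  | [], _ => 1
  | s :: L, a => ∑ b ∈ univ.filter (fun b : ReesElt α rk t n => a < b ∧ rk b.1.1 = s),
      abE rk t n L b

/-- number of chains of length `k` from `y` to `⊤` in the Rees tree -/
noncomputable def up (rk : α → ℕ) (t n : ℕ) : ℕ → ReesTree α rk t n → ℕ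
  | 0, y => if y = ⊤ then 1 else 0
  | k + 1, y => ∑ z ∈ univ.filter (fun z => y < z), up rk t n k z

/-- signed chain count from `y` to `⊤` -/
noncomputable def gg (rk : α → ℕ) (t n : ℕ) (y : ReesTree α rk t n) : ℤ :=
  ∑ k ∈ range (n + 3), (-1) ^ k * up rk t n k y

lemma reesRank_lt_of_lt (htop : rk ⊤ = n + 1)
    (hcov : ∀ x y : α, x ⋖ y → rk y = rk x + 1) (hbot : rk ⊥ = 0) {z w : ReesTree α rk t n} (h : z < w) :
    reesRank α rk t n z < reesRank α rk t n w := by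
  rcases rees_cases z with rfl | rfl | ⟨a, rfl⟩ <;>
    rcases rees_cases w with rfl | rfl | ⟨b, rfl⟩
  · exact absurd h (lt_irrefl _)
  · rw [reesRank_bot, reesRank_top]; omega
  · rw [reesRank_bot, reesRank_emb]
    have := one_le_rk hbot hcov b.2.1; omega
  · exact absurd h (by simp)
  · exact absurd h (lt_irrefl _)
  · exact absurd h (by simp)
  · exact absurd h (by simp [emb])
  · rw [reesRank_emb, reesRank_top]
    have := rk_le htop hcov a.1.1; omega
  · rw [reesRank_emb, reesRank_emb]
    rw [emb_lt_emb] at h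
    obtain ⟨h1, h2, h3⟩ := h.le
    rcases eq_or_lt_of_le h1 with heq | hlt
    · exfalso
      have hl : a.1.2.length = b.1.2.length :=
        le_antisymm h2.length_le (by rw [heq] at h3; omega)
      have he : a.1.2 = b.1.2 := h2.eq_of_length hl
      exact absurd (Subtype.ext (Prod.ext heq he)) h.ne
    · exact rk_lt_of_lt hcov hlt

lemma reesRank_le_all (htop : rk ⊤ = n + 1)
    (hcov : ∀ x y : α, x ⋖ y → rk y = rk x + 1) (z : ReesTree α rk t n) : reesRank α rk t n z ≤ n + 2 := by
  rcases rees_cases z with rfl | rfl | ⟨a, rfl⟩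
  · rw [reesRank_bot]; omega
  · rw [reesRank_top]
  · rw [reesRank_emb]; have := rk_le htop hcov a.1.1; omega

lemma reesRank_pos (hcov : ∀ x y : α, x ⋖ y → rk y = rk x + 1) (hbot : rk ⊥ = 0) {z : ReesTree α rk t n} (hz : z ≠ ⊥) : 1 ≤ reesRank α rk t n z := by
  rcases rees_cases z with rfl | rfl | ⟨a, rfl⟩
  · exact absurd rfl hz
  · rw [reesRank_top]; omega
  · rw [reesRank_emb]; exact one_le_rk hbot hcov a.2.1

lemma up_eq_zero (htop : rk ⊤ = n + 1)
    (hcov : ∀ x y : α, x ⋖ y → rk y = rk x + 1) (hbot : rk ⊥ = 0) {k : ℕ} : ∀ {y : ReesTree α rk t n}, n + 2 < reesRank α rk t n y + k →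
    up rk t n k y = 0 := by
  induction k with
  | zero =>
    intro y hy
    have h2 := reesRank_le_all htop hcov y
    omega
  | succ k ih =>
    intro y hy
    rw [up]
    refine Finset.sum_eq_zero fun z hz => ?_
    rw [Finset.mem_filter] at hz
    have := reesRank_lt_of_lt htop hcov hbot hz.2
    exact ih (by omega)

lemma alt_telescope (f : ℕ → ℤ) :
    ∀ K, ∑ k ∈ range (K + 1), (-1 : ℤ) ^ k * (f k + f (k + 1)) = f 0 + (-1) ^ K * f (K + 1) := by
  intro K
  induction K with
  | zero => simp
  | succ K ih =>
    rw [Finset.sum_range_succ, ih, pow_succ]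
    ring

lemma sum_ge_gg (htop : rk ⊤ = n + 1)
    (hcov : ∀ x y : α, x ⋖ y → rk y = rk x + 1) (hbot : rk ⊥ = 0) (z : ReesTree α rk t n) :
    ∑ w ∈ univ.filter (fun w => z ≤ w), gg rk t n w = if z = ⊤ then 1 else 0 := by
  classical
  rw [show (∑ w ∈ univ.filter (fun w => z ≤ w), gg rk t n w)
      = ∑ k ∈ range (n + 3), (-1 : ℤ) ^ k *
          (∑ w ∈ univ.filter (fun w => z ≤ w), (up rk t n k w : ℤ)) by
    simp_rw [gg]
    rw [Finset.sum_comm]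
    exact Finset.sum_congr rfl fun k _ => (Finset.mul_sum _ _ _).symm]
  have key : ∀ k, ∑ w ∈ univ.filter (fun w => z ≤ w), (up rk t n k w : ℤ)
      = (up rk t n k z : ℤ) + (up rk t n (k + 1) z : ℤ) := by
    intro k
    have hset : univ.filter (fun w => z ≤ w)
        = insert z (univ.filter (fun w : ReesTree α rk t n => z < w)) := by
      ext w
      simp only [Finset.mem_filter, Finset.mem_univ, true_and, Finset.mem_insert]
      constructor
      · intro h
        rcases eq_or_lt_of_le h with h | h
        · exact Or.inl h.symm
        · exact Or.inr h
      · rintro (rfl | h)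
        · exact le_rfl
        · exact h.le
    rw [hset, Finset.sum_insert (by simp), up]
    push_cast
    ring
  simp_rw [key]
  rw [show (n + 3) = (n + 2) + 1 by rfl,
    alt_telescope (fun k => (up rk t n k z : ℤ)) (n + 2)]
  have hz0 : up rk t n (n + 2 + 1) z = 0 := up_eq_zero htop hcov hbot (by omega)
  rw [hz0]
  simp [up]

lemma gg_top (htop : rk ⊤ = n + 1)
    (hcov : ∀ x y : α, x ⋖ y → rk y = rk x + 1) (hbot : rk ⊥ = 0) : gg rk t n (⊤ : ReesTree α rk t n) = 1 := by
  have h := sum_ge_gg htop hcov hbot (⊤ : ReesTree α rk t n)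
  classical
  have hset : univ.filter (fun w : ReesTree α rk t n => ⊤ ≤ w) = {⊤} := by
    ext w; simp [top_le_iff]
  rw [hset] at h
  simpa using h

lemma gg_rec (htop : rk ⊤ = n + 1)
    (hcov : ∀ x y : α, x ⋖ y → rk y = rk x + 1) (hbot : rk ⊥ = 0) (y : ReesTree α rk t n) (hy : y ≠ ⊤) :
    gg rk t n y = -∑ z ∈ univ.filter (fun z => y < z), gg rk t n z := by
  classical
  have h := sum_ge_gg htop hcov hbot y
  rw [if_neg hy] at h
  have hset : univ.filter (fun w : ReesTree α rk t n => y ≤ w)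
      = insert y (univ.filter (fun w : ReesTree α rk t n => y < w)) := by
    ext w
    simp only [Finset.mem_filter, Finset.mem_univ, true_and, Finset.mem_insert]
    constructor
    · intro h'
      rcases eq_or_lt_of_le h' with h' | h'
      · exact Or.inl h'.symm
      · exact Or.inr h'
    · rintro (rfl | h')
      · exact le_rfl
      · exact h'.le
  rw [hset, Finset.sum_insert (by simp)] at h
  linarith

lemma mu_eq_gg (htop : rk ⊤ = n + 1)
    (hcov : ∀ x y : α, x ⋖ y → rk y = rk x + 1) (hbot : rk ⊥ = 0) (mu : ReesTree α rk t n → ReesTree α rk t n → ℤ)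
    (hmu_refl : ∀ x, mu x x = 1)
    (hmu_rec : ∀ x y : ReesTree α rk t n, x < y → ∑ᶠ z ∈ Set.Icc x y, mu x z = 0) :
    mu ⊥ ⊤ = gg rk t n ⊥ := by
  classical
  have hA : (∑ z : ReesTree α rk t n, ∑ w : ReesTree α rk t n,
      if z ≤ w then mu ⊥ z * gg rk t n w else 0) = mu ⊥ ⊤ := by
    have h1 : ∀ z : ReesTree α rk t n, (∑ w : ReesTree α rk t n,
        if z ≤ w then mu ⊥ z * gg rk t n w else 0)
        = if z = ⊤ then mu ⊥ z else 0 := by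
      intro z
      rw [← Finset.sum_filter, ← Finset.mul_sum, sum_ge_gg htop hcov hbot z]
      by_cases h : z = ⊤ <;> simp [h]
    simp_rw [h1]
    simp
  have hB : (∑ z : ReesTree α rk t n, ∑ w : ReesTree α rk t n,
      if z ≤ w then mu ⊥ z * gg rk t n w else 0) = gg rk t n ⊥ := by
    rw [Finset.sum_comm]
    have h1 : ∀ w : ReesTree α rk t n, (∑ z : ReesTree α rk t n,
        if z ≤ w then mu ⊥ z * gg rk t n w else 0)
        = if w = ⊥ then gg rk t n w else 0 := by
      intro w
      rw [← Finset.sum_filter]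
      by_cases hw : w = ⊥
      · subst hw
        have hset : univ.filter (fun z : ReesTree α rk t n => z ≤ ⊥) = {⊥} := by
          ext z; simp [le_bot_iff]
        rw [hset, if_pos rfl]
        simp [hmu_refl]
      · rw [if_neg hw, ← Finset.sum_mul]
        have h2 : ∑ z ∈ univ.filter (fun z : ReesTree α rk t n => z ≤ w), mu ⊥ z = 0 := by
          have h3 := hmu_rec ⊥ w (Ne.bot_lt hw)
          have hset : Set.Icc (⊥ : ReesTree α rk t n) w
              = ↑(univ.filter (fun z : ReesTree α rk t n => z ≤ w)) := by
            ext z; simp [Set.mem_Icc]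
          rw [hset, finsum_mem_coe_finset] at h3
          exact h3
        rw [h2, zero_mul]
    simp_rw [h1]
    simp
  rw [← hA, hB]

end Counting

section Split

lemma minSplit (l h : ℕ) (f : Finset ℕ → ℤ) :
    ∑ T ∈ ((Finset.Icc l h).powerset.erase ∅), f T
      = ∑ s ∈ Finset.Icc l h, ∑ T ∈ (Finset.Icc (s + 1) h).powerset, f (insert s T) := by
  classical
  rw [Finset.sum_sigma']
  refine (Finset.sum_bij' (i := fun (T : Finset ℕ) (hT : T ∈ (Finset.Icc l h).powerset.erase ∅)
      => (⟨T.min' (Finset.nonempty_iff_ne_empty.2 (Finset.mem_erase.1 hT).1),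
          T.erase (T.min' (Finset.nonempty_iff_ne_empty.2 (Finset.mem_erase.1 hT).1))⟩ :
          Σ _s : ℕ, Finset ℕ))
    (j := fun x _ => insert x.1 x.2) ?_ ?_ ?_ ?_ ?_)
  · -- hi : image lands in sigma set
    intro T hT
    rw [Finset.mem_erase, Finset.mem_powerset] at hT
    have hne : T.Nonempty := Finset.nonempty_iff_ne_empty.2 hT.1
    have hmem := T.min'_mem hne
    have hsub := hT.2
    rw [Finset.mem_sigma]
    constructor
    · exact hsub hmem
    · rw [Finset.mem_powerset]
      intro x hx
      rw [Finset.mem_erase] at hx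
      have h1 := T.min'_le x hx.2
      have h2 := hsub hx.2
      simp only [Finset.mem_Icc] at h2 ⊢
      have : T.min' hne ≠ x := fun hh => hx.1 hh.symm
      omega
  · -- hj
    rintro ⟨s, T⟩ hx
    rw [Finset.mem_sigma, Finset.mem_powerset] at hx
    obtain ⟨hs, hT⟩ := hx
    rw [Finset.mem_erase, Finset.mem_powerset]
    constructor
    · exact Finset.insert_ne_empty _ _
    · intro x hx
      rcases Finset.mem_insert.1 hx with rfl | hx
      · exact hs
      · have := hT hx
        simp only [Finset.mem_Icc] at this hs ⊢
        omega
  · -- left_inv : insert (min) (erase min) = T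
    intro T hT
    simp only
    exact Finset.insert_erase (T.min'_mem _)
  · -- right_inv
    rintro ⟨s, T⟩ hx
    rw [Finset.mem_sigma, Finset.mem_powerset] at hx
    obtain ⟨hs, hT⟩ := hx
    have hns : s ∉ T := by
      intro hmem
      have := hT hmem
      simp only [Finset.mem_Icc] at this
      omega
    have hmin : (insert s T).min' (Finset.insert_nonempty _ _) = s := by
      refine le_antisymm (Finset.min'_le _ _ (Finset.mem_insert_self _ _)) ?_
      refine Finset.le_min' _ _ _ ?_
      intro y hy
      rcases Finset.mem_insert.1 hy with rfl | hy
      · exact le_rfl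
      · have := hT hy
        simp only [Finset.mem_Icc] at this
        omega
    refine Sigma.ext hmin (heq_of_eq ?_)
    show (insert s T).erase ((insert s T).min' (Finset.insert_nonempty _ _)) = T
    rw [hmin]
    exact Finset.erase_insert hns
  · intro T hT
    congr 1
    exact (Finset.insert_erase (T.min'_mem _)).symm

end Split

section GGEmb
variable {n t : ℕ}
variable {α : Type} [Fintype α] [PartialOrder α] [BoundedOrder α]
variable {rk : α → ℕ}

lemma emb_ne_top (a : ReesElt α rk t n) : emb a ≠ (⊤ : ReesTree α rk t n) := by
  have : (⊤ : ReesTree α rk t n) = ((⊤ : WithTop (ReesElt α rk t n)) : WithBot _) := rfl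
  rw [this, emb]
  intro h
  exact WithTop.coe_ne_top (WithBot.coe_injective h)

lemma sum_reesTree (f : ReesTree α rk t n → ℤ) :
    ∑ z, f z = f ⊥ + f ⊤ + ∑ b : ReesElt α rk t n, f (emb b) := by
  rw [show (∑ z : ReesTree α rk t n, f z)
      = ∑ z : Option (Option (ReesElt α rk t n)), f z from rfl]
  refine (Fintype.sum_option (fun z : Option (Option (ReesElt α rk t n)) => f z)).trans ?_
  refine (congrArg _ (Fintype.sum_option (fun z : Option (ReesElt α rk t n) => f (some z)))).trans ?_
  show f ⊥ + (f ⊤ + ∑ b : ReesElt α rk t n, f (emb b)) = _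
  ring

lemma rkE_lt (hcov : ∀ x y : α, x ⋖ y → rk y = rk x + 1)
    {a b : ReesElt α rk t n} (h : a < b) : rk a.1.1 < rk b.1.1 := by
  obtain ⟨h1, h2, h3⟩ := h.le
  rcases eq_or_lt_of_le h1 with heq | hlt
  · exfalso
    have hl : a.1.2.length = b.1.2.length :=
      le_antisymm h2.length_le (by rw [heq] at h3; omega)
    have he : a.1.2 = b.1.2 := h2.eq_of_length hl
    exact absurd (Subtype.ext (Prod.ext heq he)) h.ne
  · exact rk_lt_of_lt hcov hlt

lemma gg_emb_step (htop : rk ⊤ = n + 1) (hcov : ∀ x y : α, x ⋖ y → rk y = rk x + 1)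
    (hbot : rk ⊥ = 0) (a : ReesElt α rk t n) :
    gg rk t n (emb a)
      = -1 - ∑ b ∈ univ.filter (fun b : ReesElt α rk t n => a < b), gg rk t n (emb b) := by
  rw [gg_rec htop hcov hbot (emb a) (emb_ne_top a)]
  rw [Finset.sum_filter, sum_reesTree (fun z => if emb a < z then gg rk t n z else 0)]
  rw [if_neg (not_lt_bot), if_pos (emb_lt_top a), gg_top htop hcov hbot]
  simp only [emb_lt_emb]
  rw [← Finset.sum_filter]
  ring

lemma gg_emb (htop : rk ⊤ = n + 1) (hcov : ∀ x y : α, x ⋖ y → rk y = rk x + 1)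
    (hbot : rk ⊥ = 0) (a : ReesElt α rk t n) :
    gg rk t n (emb a) = ∑ T ∈ (Finset.Icc (rk a.1.1 + 1) (n + 1)).powerset,
      (-1) ^ (T.card + 1) * (abE rk t n (T.sort (· ≤ ·)) a : ℤ) := by
  suffices H : ∀ m, ∀ a : ReesElt α rk t n, n + 1 - rk a.1.1 ≤ m →
      gg rk t n (emb a) = ∑ T ∈ (Finset.Icc (rk a.1.1 + 1) (n + 1)).powerset,
        (-1) ^ (T.card + 1) * (abE rk t n (T.sort (· ≤ ·)) a : ℤ) by
    exact H (n + 1 - rk a.1.1) a le_rfl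
  intro m
  induction m with
  | zero =>
    intro a ha
    have hfil : univ.filter (fun b : ReesElt α rk t n => a < b) = ∅ := by
      rw [Finset.filter_eq_empty_iff]
      intro b _ hab
      have h1 := rkE_lt hcov hab
      have h2 := rk_le htop hcov b.1.1
      omega
    have hIcc : Finset.Icc (rk a.1.1 + 1) (n + 1) = ∅ := by
      rw [Finset.Icc_eq_empty_iff]
      omega
    rw [gg_emb_step htop hcov hbot, hfil, Finset.sum_empty, hIcc]
    simp [abE]
  | succ m ih =>
    intro a ha
    rw [gg_emb_step htop hcov hbot]
    -- group b by rank
    have hmaps : ∀ b ∈ univ.filter (fun b : ReesElt α rk t n => a < b),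
        rk b.1.1 ∈ Finset.Icc (rk a.1.1 + 1) (n + 1) := by
      intro b hb
      rw [Finset.mem_filter] at hb
      have h1 := rkE_lt hcov hb.2
      have h2 := rk_le htop hcov b.1.1
      rw [Finset.mem_Icc]
      omega
    rw [← Finset.sum_fiberwise_of_maps_to hmaps (fun b => gg rk t n (emb b))]
    -- rewrite inner fibers using IH
    have hfiber : ∀ s ∈ Finset.Icc (rk a.1.1 + 1) (n + 1),
        ∑ b ∈ (univ.filter (fun b : ReesElt α rk t n => a < b)).filter
            (fun b => rk b.1.1 = s), gg rk t n (emb b)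
        = ∑ b ∈ univ.filter (fun b : ReesElt α rk t n => a < b ∧ rk b.1.1 = s),
            (∑ T ∈ (Finset.Icc (s + 1) (n + 1)).powerset,
              (-1) ^ (T.card + 1) * (abE rk t n (T.sort (· ≤ ·)) b : ℤ)) := by
      intro s hs
      rw [Finset.filter_filter]
      refine Finset.sum_congr rfl fun b hb => ?_
      rw [Finset.mem_filter] at hb
      rw [ih b ?_]
      · rw [hb.2.2]
      · have h1 := rkE_lt hcov hb.2.1
        omega
    rw [Finset.sum_congr rfl hfiber]
    -- now massage the RHS
    rw [← Finset.add_sum_erase _ _ (Finset.empty_mem_powerset _)]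
    rw [minSplit (rk a.1.1 + 1) (n + 1)
      (fun T => (-1) ^ (T.card + 1) * (abE rk t n (T.sort (· ≤ ·)) a : ℤ))]
    rw [Finset.sort_empty]
    have habE : ∀ s ∈ Finset.Icc (rk a.1.1 + 1) (n + 1),
        ∀ T ∈ (Finset.Icc (s + 1) (n + 1)).powerset,
        ((-1 : ℤ)) ^ ((insert s T).card + 1) * (abE rk t n ((insert s T).sort (· ≤ ·)) a : ℤ)
        = (-1) ^ T.card * ∑ b ∈ univ.filter
            (fun b : ReesElt α rk t n => a < b ∧ rk b.1.1 = s),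
            (abE rk t n (T.sort (· ≤ ·)) b : ℤ) := by
      intro s hs T hT
      rw [Finset.mem_powerset] at hT
      have hsT : s ∉ T := by
        intro hmem
        have := hT hmem
        rw [Finset.mem_Icc] at this
        omega
      have hsort : (insert s T).sort (· ≤ ·) = s :: T.sort (· ≤ ·) := by
        refine Finset.sort_insert _ ?_ hsT
        intro b hb
        have := hT hb
        rw [Finset.mem_Icc] at this
        omega
      rw [hsort, Finset.card_insert_of_notMem hsT]
      rw [show abE rk t n (s :: T.sort (· ≤ ·)) a
        = ∑ b ∈ univ.filter (fun b : ReesElt α rk t n => a < b ∧ rk b.1.1 = s),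
            abE rk t n (T.sort (· ≤ ·)) b from rfl]
      push_cast
      ring
    rw [Finset.sum_congr rfl (fun s hs => Finset.sum_congr rfl (habE s hs))]
    -- final rearrangement
    rw [show (abE rk t n [] a : ℤ) = 1 from by rw [show abE rk t n [] a = 1 from rfl]; norm_num]
    have hswap : ∀ s ∈ Finset.Icc (rk a.1.1 + 1) (n + 1),
        ∑ T ∈ (Finset.Icc (s + 1) (n + 1)).powerset,
          ((-1 : ℤ) ^ T.card * ∑ b ∈ univ.filter
            (fun b : ReesElt α rk t n => a < b ∧ rk b.1.1 = s),
            (abE rk t n (T.sort (· ≤ ·)) b : ℤ))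
        = ∑ b ∈ univ.filter (fun b : ReesElt α rk t n => a < b ∧ rk b.1.1 = s),
            ∑ T ∈ (Finset.Icc (s + 1) (n + 1)).powerset,
              (-1) ^ T.card * (abE rk t n (T.sort (· ≤ ·)) b : ℤ) := by
      intro s hs
      rw [Finset.sum_comm]
      exact Finset.sum_congr rfl fun b _ => by rw [Finset.mul_sum]
    rw [Finset.sum_congr rfl hswap]
    have hneg : ∀ (b : ReesElt α rk t n) (T : Finset ℕ),
        ((-1 : ℤ)) ^ (T.card + 1) * (abE rk t n (T.sort (· ≤ ·)) b : ℤ)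
        = -(((-1 : ℤ)) ^ T.card * (abE rk t n (T.sort (· ≤ ·)) b : ℤ)) := by
      intro b T
      rw [pow_succ]
      ring
    simp_rw [hneg, Finset.sum_neg_distrib]
    simp
end GGEmb

section Factor
variable {n t : ℕ}
variable {α : Type} [Fintype α] [PartialOrder α] [BoundedOrder α]
variable {rk : α → ℕ}

lemma card_bounded_lists (t m : ℕ) :
    Nat.card {z : List (Fin t) // z.length ≤ m} = tnum t (m + 1) := by
  classical
  have e : {z : List (Fin t) // z.length ≤ m}
      ≃ Σ d : Fin (m + 1), List.Vector (Fin t) d.val :=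
    { toFun := fun z => ⟨⟨z.1.length, by omega⟩, ⟨z.1, rfl⟩⟩
      invFun := fun x => ⟨x.2.1, by have := x.2.2; have := x.1.2; omega⟩
      left_inv := fun z => rfl
      right_inv := by
        rintro ⟨⟨d, hd⟩, ⟨l, hl⟩⟩
        simp only [Fin.val_mk] at hl
        subst hl
        rfl }
  rw [Nat.card_congr e, Nat.card_eq_fintype_card, Fintype.card_sigma]
  simp_rw [card_vector, Fintype.card_fin]
  rw [Fin.sum_univ_eq_sum_range (fun d => t ^ d) (m + 1), tnum]

lemma fiber_card_words (htop : rk ⊤ = n + 1) (hcov : ∀ x y : α, x ⋖ y → rk y = rk x + 1)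
    (hbot : rk ⊥ = 0) (a : ReesElt α rk t n) {s : ℕ} (hs : s ≤ n + 1) (q : α)
    (hq : a.1.1 < q) (hrkq : rk q = s) :
    (univ.filter (fun b : ReesElt α rk t n => (a < b ∧ rk b.1.1 = s) ∧ b.1.1 = q)).card
      = tnum t (s - rk a.1.1 + 1) := by
  classical
  have hr1 : a.1.2.length + 1 ≤ rk a.1.1 := a.2.2.2
  have hrs : rk a.1.1 < s := by rw [← hrkq]; exact rk_lt_of_lt hcov hq
  have hqbot : q ≠ ⊥ := by
    intro h
    rw [h, hbot] at hrkq
    omega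
  rw [← Fintype.card_subtype, ← Nat.card_eq_fintype_card]
  rw [← card_bounded_lists t (s - rk a.1.1)]
  refine Nat.card_congr ?_
  refine
    { toFun := fun b => ⟨b.1.1.2.drop a.1.2.length, ?_⟩
      invFun := fun z => ⟨⟨(q, a.1.2 ++ z.1), ?_⟩, ?_⟩
      left_inv := ?_
      right_inv := ?_ }
  · -- length of dropped suffix
    obtain ⟨⟨hab, hrkb⟩, hbq⟩ := b.2
    have h3 := hab.le.2.2
    rw [List.length_drop]
    rw [hrkb] at h3
    omega
  · -- membership conditions for the constructed element
    refine ⟨hqbot, ?_, ?_⟩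
    · have := z.2
      rw [List.length_append]
      omega
    · have := z.2
      rw [List.length_append, hrkq]
      omega
  · -- filter conditions
    refine ⟨⟨?_, hrkq⟩, rfl⟩
    refine lt_of_le_of_ne ⟨hq.le, ⟨z.1, rfl⟩, ?_⟩ ?_
    · show rk a.1.1 + (a.1.2 ++ z.1).length ≤ rk q + a.1.2.length
      have := z.2
      rw [List.length_append, hrkq]
      omega
    · intro hEq
      have h5 : a.1.1 = q := congrArg (fun x : ReesElt α rk t n => x.1.1) hEq
      exact absurd h5 (ne_of_lt hq)
  · -- left inverse
    rintro ⟨b, hb⟩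
    obtain ⟨⟨hab, hrkb⟩, hbq⟩ := hb
    apply Subtype.ext
    apply Subtype.ext
    refine Prod.ext hbq.symm ?_
    obtain ⟨zz, hzz⟩ := hab.le.2.1
    show a.1.2 ++ b.1.2.drop a.1.2.length = b.1.2
    rw [← hzz, List.drop_left]
  · -- right inverse
    rintro ⟨z, hz⟩
    apply Subtype.ext
    show (a.1.2 ++ z).drop a.1.2.length = z
    rw [List.drop_left]

lemma abE_factor (htop : rk ⊤ = n + 1) (hcov : ∀ x y : α, x ⋖ y → rk y = rk x + 1)
    (hbot : rk ⊥ = 0) :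
    ∀ (L : List ℕ) (a : ReesElt α rk t n), (∀ s ∈ L, s ≤ n + 1) →
      List.Chain (· < ·) (rk a.1.1) L →
      abE rk t n L a = wAux t (rk a.1.1) L * abP rk L a.1.1 := by
  intro L
  induction L with
  | nil => intro a _ _; simp [abE, wAux, abP]
  | cons s L ih =>
    intro a hle hch
    simp only [List.Chain, List.isChain_cons_cons] at hch
    obtain ⟨hrs, hchL⟩ := hch
    have hs : s ≤ n + 1 := hle s (List.mem_cons_self)
    have hplt : ∀ {b : ReesElt α rk t n}, a < b → a.1.1 < b.1.1 := by
      intro b h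
      refine lt_of_le_of_ne h.le.1 (fun he => ?_)
      have := rkE_lt hcov h
      rw [he] at this
      omega
    rw [show abE rk t n (s :: L) a = ∑ b ∈ univ.filter
        (fun b : ReesElt α rk t n => a < b ∧ rk b.1.1 = s), abE rk t n L b from rfl]
    have hcong : ∀ b ∈ univ.filter (fun b : ReesElt α rk t n => a < b ∧ rk b.1.1 = s),
        abE rk t n L b = wAux t s L * abP rk L b.1.1 := by
      intro b hb
      rw [Finset.mem_filter] at hb
      rw [ih b (fun x hx => hle x (List.mem_cons_of_mem _ hx)) (by rw [hb.2.2]; exact hchL)]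
      rw [hb.2.2]
    rw [Finset.sum_congr rfl hcong]
    have hmaps : ∀ b ∈ univ.filter (fun b : ReesElt α rk t n => a < b ∧ rk b.1.1 = s),
        b.1.1 ∈ univ.filter (fun q => a.1.1 < q ∧ rk q = s) := by
      intro b hb
      rw [Finset.mem_filter] at hb ⊢
      exact ⟨Finset.mem_univ _, hplt hb.2.1, hb.2.2⟩
    rw [← Finset.sum_fiberwise_of_maps_to hmaps (fun b => wAux t s L * abP rk L b.1.1)]
    have hfib : ∀ q ∈ univ.filter (fun q => a.1.1 < q ∧ rk q = s),
        ∑ b ∈ (univ.filter (fun b : ReesElt α rk t n => a < b ∧ rk b.1.1 = s)).filter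
          (fun b => b.1.1 = q), (wAux t s L * abP rk L b.1.1)
        = tnum t (s - rk a.1.1 + 1) * (wAux t s L * abP rk L q) := by
      intro q hq
      rw [Finset.mem_filter] at hq
      rw [Finset.filter_filter]
      have hconst : ∀ b ∈ univ.filter
          (fun b : ReesElt α rk t n => (a < b ∧ rk b.1.1 = s) ∧ b.1.1 = q),
          wAux t s L * abP rk L b.1.1 = wAux t s L * abP rk L q := by
        intro b hb
        rw [(Finset.mem_filter.1 hb).2.2]
      rw [Finset.sum_congr rfl hconst]
      rw [Finset.sum_const, fiber_card_words htop hcov hbot a hs q hq.2.1 hq.2.2, smul_eq_mul]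
    rw [Finset.sum_congr rfl hfib]
    rw [show wAux t (rk a.1.1) (s :: L) = tnum t (s - rk a.1.1 + 1) * wAux t s L from rfl]
    rw [show abP rk (s :: L) a.1.1
      = ∑ q ∈ univ.filter (fun q => a.1.1 < q ∧ rk q = s), abP rk L q from rfl]
    rw [Finset.mul_sum]
    refine Finset.sum_congr rfl fun q _ => ?_
    ring

end Factor

section Flag
variable {n t : ℕ}
variable {α : Type} [Fintype α] [PartialOrder α] [BoundedOrder α]
variable {rk : α → ℕ}

lemma nat_card_sigma {ι : Type} [Fintype ι] (f : ι → Type) [∀ i, Finite (f i)] :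
    Nat.card (Σ i, f i) = ∑ i, Nat.card (f i) := by
  classical
  haveI : ∀ i, Fintype (f i) := fun i => Fintype.ofFinite _
  rw [Nat.card_eq_fintype_card, Fintype.card_sigma]
  exact Finset.sum_congr rfl fun i _ => (Nat.card_eq_fintype_card).symm

lemma abP_card : ∀ (L : List ℕ) (x : α),
    abP rk L x = Nat.card {g : Fin L.length → α //
      (∀ i, rk (g i) = L.get i) ∧ (∀ i j : Fin L.length, i < j → g i < g j) ∧
      (∀ i, x < g i)} := by
  intro L
  induction L with
  | nil =>
    intro x
    haveI : Unique {g : Fin ([] : List ℕ).length → α //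
        (∀ i, rk (g i) = ([] : List ℕ).get i) ∧
        (∀ i j : Fin ([] : List ℕ).length, i < j → g i < g j) ∧ (∀ i, x < g i)} :=
      { default := ⟨fun i => i.elim0, fun i => i.elim0, fun i j => i.elim0, fun i => i.elim0⟩
        uniq := fun y => Subtype.ext (funext fun i => i.elim0) }
    rw [Nat.card_unique]
    rfl
  | cons s L ih =>
    intro x
    classical
    rw [show abP rk (s :: L) x
      = ∑ q ∈ univ.filter (fun q => x < q ∧ rk q = s), abP rk L q from rfl]
    rw [Finset.sum_congr rfl (fun q _ => ih q)]
    rw [Finset.sum_subtype (univ.filter (fun q => x < q ∧ rk q = s))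
      (p := fun q => x < q ∧ rk q = s) (by intro q; simp)
      (fun q => Nat.card {g : Fin L.length → α //
        (∀ i, rk (g i) = L.get i) ∧ (∀ i j : Fin L.length, i < j → g i < g j) ∧
        (∀ i, q < g i)})]
    have e : {g : Fin (s :: L).length → α //
        (∀ i, rk (g i) = (s :: L).get i) ∧
        (∀ i j : Fin (s :: L).length, i < j → g i < g j) ∧ (∀ i, x < g i)}
        ≃ Σ q : {q : α // x < q ∧ rk q = s}, {g : Fin L.length → α //
        (∀ i, rk (g i) = L.get i) ∧ (∀ i j : Fin L.length, i < j → g i < g j) ∧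
        (∀ i, q.1 < g i)} := by
      refine
        { toFun := fun g => ⟨⟨g.1 (0 : Fin (L.length + 1)), g.2.2.2 (0 : Fin (L.length + 1)),
              g.2.1 (0 : Fin (L.length + 1))⟩,
            ⟨fun i => g.1 i.succ,
              fun i => g.2.1 i.succ,
              fun i j hij => g.2.2.1 i.succ j.succ (Fin.succ_lt_succ_iff.2 hij),
              fun i => g.2.2.1 (0 : Fin (L.length + 1)) i.succ (Fin.succ_pos i)⟩⟩
          invFun := fun p => ⟨Fin.cases p.1.1 p.2.1, ?_, ?_, ?_⟩
          left_inv := ?_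
          right_inv := ?_ }
      · intro i
        induction i using Fin.cases with
        | zero => simpa using p.1.2.2
        | succ i => simpa using p.2.2.1 i
      · intro i j hij
        induction j using Fin.cases with
        | zero => exact absurd hij (Fin.not_lt_zero _)
        | succ j =>
          induction i using Fin.cases with
          | zero => simpa using p.2.2.2.2 j
          | succ i =>
            have := p.2.2.2.1 i j (by exact Fin.succ_lt_succ_iff.1 hij)
            simpa using this
      · intro i
        induction i using Fin.cases with
        | zero => simpa using p.1.2.1
        | succ i => simpa using lt_trans p.1.2.1 (p.2.2.2.2 i)
      · intro g
        apply Subtype.ext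
        funext i
        induction i using Fin.cases with
        | zero => simp
        | succ i => simp
      · rintro ⟨⟨q, hq⟩, ⟨g, hg⟩⟩
        apply Sigma.ext
        · exact Subtype.ext (by simp)
        · refine (Subtype.heq_iff_coe_eq ?_).2 ?_
          · intro gg
            simp only [Fin.cases_zero]
          · funext i
            simp
    rw [Nat.card_congr e, nat_card_sigma]

lemma flagF_eq (htop : rk ⊤ = n + 1) (hcov : ∀ x y : α, x ⋖ y → rk y = rk x + 1)
    (hbot : rk ⊥ = 0) {S : Finset ℕ} (hS : S ⊆ Finset.Icc 1 n) :
    flagF rk S = abP rk (S.sort (· ≤ ·)) ⊥ := by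
  classical
  rw [abP_card, flagF]
  set e := S.orderIsoOfFin ((Finset.length_sort (α := ℕ) (· ≤ ·)).symm) with he
  have key : ∀ i, ((e i : {x // x ∈ S}) : ℕ) = (S.sort (· ≤ ·)).get i := by
    intro i
    rw [he, Finset.coe_orderIsoOfFin_apply, Finset.orderEmbOfFin_apply, List.get_eq_getElem]
    rfl
  refine (Nat.card_congr ?_).symm
  refine
    { toFun := fun g => ⟨fun s => g.1 (e.symm s), ?_, ?_, ?_⟩
      invFun := fun G => ⟨fun i => G.1 (e i), ?_, ?_, ?_⟩
      left_inv := ?_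
      right_inv := ?_ }
  · -- ranks for flagF
    intro s
    rw [g.2.1 (e.symm s), ← key (e.symm s), OrderIso.apply_symm_apply]
  · -- strict mono for flagF
    intro s s' hss
    refine g.2.2.1 _ _ ?_
    rw [← OrderIso.lt_iff_lt e, OrderIso.apply_symm_apply, OrderIso.apply_symm_apply]
    exact Subtype.mk_lt_mk.2 hss
  · -- bounds
    intro s
    refine ⟨g.2.2.2 _, ?_⟩
    refine lt_of_le_of_ne le_top ?_
    intro heq
    have h1 : rk (g.1 (e.symm s)) = (s : ℕ) := by
      rw [g.2.1 (e.symm s), ← key (e.symm s), OrderIso.apply_symm_apply]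
    have h2 := hS s.2
    rw [Finset.mem_Icc] at h2
    have heq' : (g.1 (e.symm s) : α) = ⊤ := heq
    rw [heq', htop] at h1
    omega
  · -- ranks for abP side
    intro i
    rw [G.2.1 (e i), ← key i]
  · -- strict mono
    intro i j hij
    refine G.2.2.1 _ _ ?_
    have : e i < e j := (OrderIso.lt_iff_lt e).2 hij
    exact Subtype.mk_lt_mk.1 (by exact this)
  · -- above bot
    intro i
    exact (G.2.2.2 (e i)).1
  · intro g
    apply Subtype.ext
    funext i
    simp
  · intro G
    apply Subtype.ext
    funext s
    simp

lemma abP_append (htop : rk ⊤ = n + 1) (hcov : ∀ x y : α, x ⋖ y → rk y = rk x + 1)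
    (hbot : rk ⊥ = 0) :
    ∀ (L : List ℕ) (x : α), x ≠ ⊤ → (∀ s ∈ L, s ≤ n) →
      abP rk (L ++ [n + 1]) x = abP rk L x := by
  intro L
  induction L with
  | nil =>
    intro x hx _
    have hset : univ.filter (fun q : α => x < q ∧ rk q = n + 1) = {⊤} := by
      ext q
      simp only [Finset.mem_filter, Finset.mem_univ, true_and, Finset.mem_singleton]
      constructor
      · rintro ⟨_, hq⟩
        exact eq_top_of_rk htop hcov hq
      · rintro rfl
        exact ⟨lt_top_iff_ne_top.2 hx, htop⟩
    rw [show abP rk ([] ++ [n + 1]) x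
      = ∑ q ∈ univ.filter (fun q : α => x < q ∧ rk q = n + 1), abP rk [] q from rfl]
    rw [hset]
    simp [abP]
  | cons s L ih =>
    intro x hx hle
    rw [show abP rk ((s :: L) ++ [n + 1]) x
      = ∑ q ∈ univ.filter (fun q : α => x < q ∧ rk q = s), abP rk (L ++ [n + 1]) q from rfl]
    rw [show abP rk (s :: L) x
      = ∑ q ∈ univ.filter (fun q : α => x < q ∧ rk q = s), abP rk L q from rfl]
    refine Finset.sum_congr rfl fun q hq => ?_
    rw [Finset.mem_filter] at hq
    refine ih q ?_ (fun u hu => hle u (List.mem_cons_of_mem _ hu))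
    intro heq
    have := hq.2.2
    rw [heq, htop] at this
    have hsle := hle s (List.mem_cons_self)
    omega

lemma sort_insert_max {S : Finset ℕ} {m : ℕ} (h : ∀ x ∈ S, x < m) :
    (insert m S).sort (· ≤ ·) = S.sort (· ≤ ·) ++ [m] := by
  have hm : m ∉ S := fun hmem => lt_irrefl m (h m hmem)
  refine (fun hp hs => List.Perm.eq_of_pairwise' (Finset.pairwise_sort _ _) hs hp) ?_ ?_
  · have p1 := Finset.sort_perm_toList (insert m S) (· ≤ ·)
    have p2 : (insert m S).toList.Perm (m :: S.toList) := Finset.toList_insert hm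
    have p3 : S.toList.Perm (S.sort (· ≤ ·)) := (Finset.sort_perm_toList S (· ≤ ·)).symm
    exact ((p1.trans p2).trans ((p3.cons m).trans
      (List.perm_append_singleton m _).symm))
  · rw [List.pairwise_append]
    refine ⟨Finset.pairwise_sort _ _, List.pairwise_singleton _ _, ?_⟩
    intro x hx y hy
    rw [List.mem_singleton] at hy
    subst hy
    exact (h x ((Finset.mem_sort _).1 hx)).le

lemma tnum_succ (t m : ℕ) : tnum t (m + 1) = 1 + t * tnum t m := by
  rw [tnum, tnum, Finset.sum_range_succ', pow_zero]
  simp_rw [pow_succ']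
  rw [← Finset.mul_sum]
  ring

lemma wWeight_empty (t : ℕ) : wWeight t ∅ = 1 := by
  rw [wWeight, Finset.sort_empty]
  rfl

lemma wWeight_insert_min {s : ℕ} (hs : 1 ≤ s) {T : Finset ℕ} (hT : ∀ x ∈ T, s < x) :
    wWeight t (insert s T) = tnum t s * wAux t s (T.sort (· ≤ ·)) := by
  have hm : s ∉ T := fun hmem => lt_irrefl s (hT s hmem)
  rw [wWeight, Finset.sort_insert _ (fun b hb => (hT b hb).le) hm]
  show tnum t (s - 1 + 1) * wAux t s _ = _
  rw [show s - 1 + 1 = s from by omega]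

end Flag

section Assemble
variable {n t : ℕ}
variable {α : Type} [Fintype α] [PartialOrder α] [BoundedOrder α]
variable {rk : α → ℕ}

lemma fiber_card_words_bot (htop : rk ⊤ = n + 1) (hcov : ∀ x y : α, x ⋖ y → rk y = rk x + 1)
    (hbot : rk ⊥ = 0) (p : α) (hp : p ≠ ⊥) :
    (univ.filter (fun b : ReesElt α rk t n => b.1.1 = p)).card = tnum t (rk p) := by
  classical
  have h1 : 1 ≤ rk p := one_le_rk hbot hcov hp
  have h2 : rk p ≤ n + 1 := rk_le htop hcov p
  rw [← Fintype.card_subtype, ← Nat.card_eq_fintype_card]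
  rw [show tnum t (rk p) = tnum t ((rk p - 1) + 1) from by rw [show rk p - 1 + 1 = rk p from by omega]]
  rw [← card_bounded_lists t (rk p - 1)]
  refine Nat.card_congr ?_
  refine
    { toFun := fun b => ⟨b.1.1.2, ?_⟩
      invFun := fun w => ⟨⟨(p, w.1), hp, ?_, ?_⟩, rfl⟩
      left_inv := ?_
      right_inv := ?_ }
  · have h3 := b.1.2.2.2
    have h4 : rk b.1.1.1 = rk p := by rw [b.2]
    omega
  · have hw := w.2
    show (w.1 : List (Fin t)).length ≤ n
    omega
  · have hw := w.2
    show (w.1 : List (Fin t)).length + 1 ≤ rk p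
    omega
  · rintro ⟨b, hb⟩
    apply Subtype.ext
    apply Subtype.ext
    exact Prod.ext hb.symm rfl
  · rintro ⟨w, hw⟩
    rfl

lemma vWeight_eq (htop : rk ⊤ = n + 1) {S : Finset ℕ} (hS : S ⊆ Finset.Icc 1 n) :
    (vWeight t n S : ℤ) = (wWeight t (insert (n + 1) S) : ℤ) - (wWeight t S : ℤ) := by
  by_cases h : S = ∅
  · subst h
    rw [vWeight, if_pos rfl]
    have h1 : wWeight t (insert (n + 1) (∅ : Finset ℕ)) = tnum t (n + 1) := by
      rw [wWeight_insert_min (by omega) (fun x hx => absurd hx (Finset.notMem_empty x))]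
      rw [Finset.sort_empty]
      show tnum t (n + 1) * 1 = tnum t (n + 1)
      ring
    rw [h1, wWeight_empty, tnum_succ]
    push_cast
    ring
  · rw [vWeight, if_neg h]
    have : S ∪ {n + 1} = insert (n + 1) S := by
      rw [Finset.insert_eq, Finset.union_comm]
    rw [this]

lemma gg_bot_formula (htop : rk ⊤ = n + 1) (hcov : ∀ x y : α, x ⋖ y → rk y = rk x + 1)
    (hbot : rk ⊥ = 0) :
    gg rk t n (⊥ : ReesTree α rk t n) = ∑ S ∈ (Finset.Icc 1 n).powerset,
      (-1) ^ S.card * vWeight t n S * (flagF rk S : ℤ) := by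
  classical
  have hbot_ne : (⊥ : α) ≠ ⊤ := by
    intro h
    rw [h, htop] at hbot
    omega
  -- Step 1 : gg ⊥ = -(1 + ∑_b gg (emb b))
  have step1 : gg rk t n (⊥ : ReesTree α rk t n)
      = -(1 + ∑ b : ReesElt α rk t n, gg rk t n (emb b)) := by
    rw [gg_rec htop hcov hbot ⊥ bot_lt_top'.ne]
    rw [Finset.sum_filter,
      sum_reesTree (fun z => if (⊥ : ReesTree α rk t n) < z then gg rk t n z else 0)]
    rw [if_neg (lt_irrefl _), if_pos bot_lt_top', gg_top htop hcov hbot]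
    have hb : ∀ b : ReesElt α rk t n,
        (if (⊥ : ReesTree α rk t n) < emb b then gg rk t n (emb b) else 0)
        = gg rk t n (emb b) := fun b => if_pos (bot_lt_emb b)
    simp_rw [hb]
    ring
  -- Step 2 : pointwise formula for gg (emb b), products factored
  have step2 : ∀ b : ReesElt α rk t n, gg rk t n (emb b)
      = ∑ T ∈ (Finset.Icc (rk b.1.1 + 1) (n + 1)).powerset,
          (-1) ^ (T.card + 1) *
            ((wAux t (rk b.1.1) (T.sort (· ≤ ·)) * abP rk (T.sort (· ≤ ·)) b.1.1 : ℕ) : ℤ) := by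
    intro b
    rw [gg_emb htop hcov hbot b]
    refine Finset.sum_congr rfl fun T hT => ?_
    rw [Finset.mem_powerset] at hT
    rw [abE_factor htop hcov hbot _ b ?_ ?_]
    · intro s hs
      have := hT ((Finset.mem_sort _).1 hs)
      rw [Finset.mem_Icc] at this
      omega
    · show List.IsChain _ (_ :: _)
      rw [List.isChain_iff_pairwise, List.pairwise_cons]
      refine ⟨?_, (Finset.sortedLT_sort T).pairwise⟩
      intro x hx
      have := hT ((Finset.mem_sort _).1 hx)
      rw [Finset.mem_Icc] at this
      omega
  -- Step 3 : sum over b, fibered over p = b.1.1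
  have step3 : (∑ b : ReesElt α rk t n, gg rk t n (emb b))
      = ∑ p ∈ univ.filter (fun p : α => p ≠ ⊥),
          (tnum t (rk p) : ℤ) *
            ∑ T ∈ (Finset.Icc (rk p + 1) (n + 1)).powerset,
              (-1) ^ (T.card + 1) *
                ((wAux t (rk p) (T.sort (· ≤ ·)) * abP rk (T.sort (· ≤ ·)) p : ℕ) : ℤ) := by
    rw [Finset.sum_congr rfl (fun b _ => step2 b)]
    rw [show (∑ b : ReesElt α rk t n, _) = ∑ b ∈ univ, (fun p : α =>
        ∑ T ∈ (Finset.Icc (rk p + 1) (n + 1)).powerset,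
          (-1) ^ (T.card + 1) *
            ((wAux t (rk p) (T.sort (· ≤ ·)) * abP rk (T.sort (· ≤ ·)) p : ℕ) : ℤ)) b.1.1
        from rfl]
    have hmaps : ∀ b ∈ (univ : Finset (ReesElt α rk t n)),
        b.1.1 ∈ univ.filter (fun p : α => p ≠ ⊥) := by
      intro b _
      rw [Finset.mem_filter]
      exact ⟨Finset.mem_univ _, b.2.1⟩
    rw [← Finset.sum_fiberwise_of_maps_to hmaps]
    refine Finset.sum_congr rfl fun p hp => ?_
    rw [Finset.mem_filter] at hp
    have hconst : ∀ b ∈ univ.filter (fun b : ReesElt α rk t n => b.1.1 = p),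
        (fun q : α => ∑ T ∈ (Finset.Icc (rk q + 1) (n + 1)).powerset,
          (-1) ^ (T.card + 1) *
            ((wAux t (rk q) (T.sort (· ≤ ·)) * abP rk (T.sort (· ≤ ·)) q : ℕ) : ℤ)) b.1.1
        = ∑ T ∈ (Finset.Icc (rk p + 1) (n + 1)).powerset,
          (-1) ^ (T.card + 1) *
            ((wAux t (rk p) (T.sort (· ≤ ·)) * abP rk (T.sort (· ≤ ·)) p : ℕ) : ℤ) := by
      intro b hb
      rw [Finset.mem_filter] at hb
      simp only
      rw [hb.2]
    rw [Finset.sum_congr rfl hconst, Finset.sum_const,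
      fiber_card_words_bot htop hcov hbot p hp.2, nsmul_eq_mul]
  -- Step 4 : reorganize to a sum over nonempty subsets of Icc 1 (n+1)
  have step4 : (∑ p ∈ univ.filter (fun p : α => p ≠ ⊥),
          (tnum t (rk p) : ℤ) *
            ∑ T ∈ (Finset.Icc (rk p + 1) (n + 1)).powerset,
              (-1) ^ (T.card + 1) *
                ((wAux t (rk p) (T.sort (· ≤ ·)) * abP rk (T.sort (· ≤ ·)) p : ℕ) : ℤ))
      = ∑ U ∈ ((Finset.Icc 1 (n + 1)).powerset.erase ∅),
          (-1) ^ U.card * ((wWeight t U * abP rk (U.sort (· ≤ ·)) ⊥ : ℕ) : ℤ) := by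
    rw [minSplit 1 (n + 1)
      (fun U => (-1) ^ U.card * ((wWeight t U * abP rk (U.sort (· ≤ ·)) ⊥ : ℕ) : ℤ))]
    have hmaps : ∀ p ∈ univ.filter (fun p : α => p ≠ ⊥),
        rk p ∈ Finset.Icc 1 (n + 1) := by
      intro p hp
      rw [Finset.mem_filter] at hp
      rw [Finset.mem_Icc]
      exact ⟨one_le_rk hbot hcov hp.2, rk_le htop hcov p⟩
    rw [← Finset.sum_fiberwise_of_maps_to hmaps]
    refine Finset.sum_congr rfl fun s hs => ?_
    rw [Finset.mem_Icc] at hs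
    rw [Finset.filter_filter]
    -- rewrite each p-term using rk p = s
    have hcong : ∀ p ∈ univ.filter (fun p : α => p ≠ ⊥ ∧ rk p = s),
        (tnum t (rk p) : ℤ) *
            ∑ T ∈ (Finset.Icc (rk p + 1) (n + 1)).powerset,
              (-1) ^ (T.card + 1) *
                ((wAux t (rk p) (T.sort (· ≤ ·)) * abP rk (T.sort (· ≤ ·)) p : ℕ) : ℤ)
        = ∑ T ∈ (Finset.Icc (s + 1) (n + 1)).powerset,
              (-1) ^ (T.card + 1) *
                ((tnum t s * wAux t s (T.sort (· ≤ ·)) * abP rk (T.sort (· ≤ ·)) p : ℕ) : ℤ) := by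
      intro p hp
      rw [Finset.mem_filter] at hp
      rw [hp.2.2, Finset.mul_sum]
      refine Finset.sum_congr rfl fun T _ => ?_
      push_cast
      ring
    rw [Finset.sum_congr rfl hcong]
    rw [Finset.sum_comm]
    refine Finset.sum_congr rfl fun T hT => ?_
    rw [Finset.mem_powerset] at hT
    have hTgt : ∀ x ∈ T, s < x := by
      intro x hx
      have := hT hx
      rw [Finset.mem_Icc] at this
      omega
    have hsT : s ∉ T := fun hmem => lt_irrefl s (hTgt s hmem)
    have hw : tnum t s * wAux t s (T.sort (· ≤ ·)) = wWeight t (insert s T) :=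
      (wWeight_insert_min hs.1 hTgt).symm
    have hcard : (insert s T).card = T.card + 1 := Finset.card_insert_of_notMem hsT
    have hsort : (insert s T).sort (· ≤ ·) = s :: T.sort (· ≤ ·) :=
      Finset.sort_insert _ (fun b hb => (hTgt b hb).le) hsT
    have habP : abP rk ((insert s T).sort (· ≤ ·)) (⊥ : α)
        = ∑ p ∈ univ.filter (fun p : α => p ≠ ⊥ ∧ rk p = s),
            abP rk (T.sort (· ≤ ·)) p := by
      rw [hsort]
      rw [show abP rk (s :: T.sort (· ≤ ·)) (⊥ : α)
        = ∑ q ∈ univ.filter (fun q : α => ⊥ < q ∧ rk q = s), abP rk (T.sort (· ≤ ·)) q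
        from rfl]
      refine Finset.sum_congr ?_ (fun _ _ => rfl)
      refine Finset.filter_congr ?_
      intro q _
      rw [bot_lt_iff_ne_bot]
    rw [hcard, habP, ← hw]
    push_cast
    simp only [Finset.mul_sum]
    all_goals exact Finset.sum_congr rfl fun p _ => by ring
  -- Step 5 : put everything together
  rw [step1, step3, step4]
  have hmem : (∅ : Finset ℕ) ∈ (Finset.Icc 1 (n + 1)).powerset :=
    Finset.empty_mem_powerset _
  have hfempty : (-1 : ℤ) ^ (∅ : Finset ℕ).card *
      ((wWeight t ∅ * abP rk ((∅ : Finset ℕ).sort (· ≤ ·)) ⊥ : ℕ) : ℤ) = 1 := by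
    rw [Finset.sort_empty, wWeight_empty,
      show abP rk ([] : List ℕ) (⊥ : α) = 1 from rfl]
    norm_num
  have hsum : (1 : ℤ) + ∑ U ∈ ((Finset.Icc 1 (n + 1)).powerset.erase ∅),
        (-1) ^ U.card * ((wWeight t U * abP rk (U.sort (· ≤ ·)) ⊥ : ℕ) : ℤ)
      = ∑ U ∈ (Finset.Icc 1 (n + 1)).powerset,
        (-1) ^ U.card * ((wWeight t U * abP rk (U.sort (· ≤ ·)) ⊥ : ℕ) : ℤ) := by
    rw [← Finset.add_sum_erase _ _ hmem, hfempty]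
  rw [hsum]
  have hIcc : Finset.Icc 1 (n + 1) = insert (n + 1) (Finset.Icc 1 n) := by
    ext x
    simp only [Finset.mem_Icc, Finset.mem_insert]
    omega
  have hnotmem : (n + 1) ∉ Finset.Icc 1 n := by
    rw [Finset.mem_Icc]
    omega
  rw [hIcc, Finset.sum_powerset_insert hnotmem]
  rw [← Finset.sum_add_distrib, ← Finset.sum_neg_distrib]
  refine Finset.sum_congr rfl fun S hS => ?_
  rw [Finset.mem_powerset] at hS
  have hSn : ∀ x ∈ S, x ≤ n := by
    intro x hx
    have := hS hx
    rw [Finset.mem_Icc] at this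
    omega
  have hnS : (n + 1) ∉ S := fun hmem => by have := hSn _ hmem; omega
  have hcard : (insert (n + 1) S).card = S.card + 1 := Finset.card_insert_of_notMem hnS
  have hsort : (insert (n + 1) S).sort (· ≤ ·) = S.sort (· ≤ ·) ++ [n + 1] :=
    sort_insert_max (fun x hx => by have := hSn x hx; omega)
  have hab : abP rk (S.sort (· ≤ ·) ++ [n + 1]) (⊥ : α) = abP rk (S.sort (· ≤ ·)) ⊥ :=
    abP_append htop hcov hbot _ ⊥ hbot_ne
      (fun s hs' => hSn s ((Finset.mem_sort _).1 hs'))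
  rw [hcard, hsort, hab, vWeight_eq htop hS, flagF_eq htop hcov hbot hS]
  push_cast
  ring

end Assemble

theorem statement3 (n t : ℕ) (ht : 1 ≤ t)
    (α : Type) [Fintype α] [PartialOrder α] [BoundedOrder α]
    (rk : α → ℕ) (hbot : rk ⊥ = 0) (htop : rk ⊤ = n + 1)
    (hcov : ∀ x y : α, x ⋖ y → rk y = rk x + 1)
    (mu : ReesTree α rk t n → ReesTree α rk t n → ℤ)
    (hmu_refl : ∀ x, mu x x = 1)
    (hmu_rec : ∀ x y : ReesTree α rk t n, x < y → ∑ᶠ z ∈ Set.Icc x y, mu x z = 0) :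
    mu ⊥ ⊤ = ∑ S ∈ (Finset.Icc 1 n).powerset,
      (-1) ^ S.card * vWeight t n S * (flagF rk S : ℤ) := by
  rw [mu_eq_gg htop hcov hbot mu hmu_refl hmu_rec]
  exact gg_bot_formula htop hcov hbot
end
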